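/- With the notation above, the limit C_∞ := lim_{t→∞} C(t) exists, equals S E_∞ S⁻¹ C₀ with E_∞ = diag(0,…,0,1,…,1) (k zeros, n−k ones), and satisfies A C_∞ = 0. -/

import Mathlib

open Matrix Filter Topology

theorem covariance_limit {n m k : ℕ} (hk : k ≤ n) (α : ℝ) (hα : 0 < α)
    (C₀ : Matrix (Fin n) (Fin n) ℝ) (hC₀ : C₀.PosDef)
    (A : Matrix (Fin m) (Fin n) ℝ)
    (Γ : Matrix (Fin m) (Fin m) ℝ) (hΓ : Γ.PosDef)
    (S : Matrix (Fin n) (Fin n) ℝ) (μ : Fin n → ℝ)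
    (hS : IsUnit S.det)
    (hμpos : ∀ i : Fin n, (i : ℕ) < k → 0 < μ i)
    (hμzero : ∀ i : Fin n, k ≤ (i : ℕ) → μ i = 0)
    (hdiag : C₀ * Aᵀ * Γ⁻¹ * A = S * Matrix.diagonal μ * S⁻¹)
    (C : ℝ → Matrix (Fin n) (Fin n) ℝ)
    (hC : ∀ t : ℝ, C t = C₀ * (1 + (α * t) • (Aᵀ * Γ⁻¹ * A * C₀))⁻¹)
    (Cinf : Matrix (Fin n) (Fin n) ℝ)
    (hCinf : Cinf =
      S * Matrix.diagonal (fun i : Fin n => if (i : ℕ) < k then (0 : ℝ) else 1) * S⁻¹ * C₀) :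
    (∀ i j : Fin n, Tendsto (fun t : ℝ => C t i j) atTop (𝓝 (Cinf i j))) ∧
    A * Cinf = 0 := by
  have hSS : S * S⁻¹ = 1 := Matrix.mul_nonsing_inv S hS
  have hS'S : S⁻¹ * S = 1 := Matrix.nonsing_inv_mul S hS
  have conj_mul : ∀ X Y : Matrix (Fin n) (Fin n) ℝ,
      (S * X * S⁻¹) * (S * Y * S⁻¹) = S * (X * Y) * S⁻¹ := by
    intro X Y
    simp only [Matrix.mul_assoc]
    rw [← Matrix.mul_assoc S⁻¹ S, hS'S, Matrix.one_mul]
  set B : Matrix (Fin n) (Fin n) ℝ := Aᵀ * Γ⁻¹ * A with hB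
  have hCB : C₀ * B = S * Matrix.diagonal μ * S⁻¹ := by
    rw [← hdiag, hB]; simp only [Matrix.mul_assoc]
  have hμnonneg : ∀ i, 0 ≤ μ i := by
    intro i
    rcases lt_or_ge (i : ℕ) k with h | h
    · exact (hμpos i h).le
    · exact (hμzero i h).ge
  have hpos : ∀ t : ℝ, 0 ≤ t → ∀ i, 0 < 1 + α * t * μ i := by
    intro t ht i
    have : 0 ≤ α * t * μ i := mul_nonneg (mul_nonneg hα.le ht) (hμnonneg i)
    linarith
  -- Key algebraic identity for t ≥ 0
  have key : ∀ t : ℝ, 0 ≤ t →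
      C t = S * Matrix.diagonal (fun i => (1 + α * t * μ i)⁻¹) * S⁻¹ * C₀ := by
    intro t ht
    set M : Matrix (Fin n) (Fin n) ℝ := 1 + (α * t) • (C₀ * B) with hM
    set N : Matrix (Fin n) (Fin n) ℝ := 1 + (α * t) • (B * C₀) with hN
    have hfun : (fun i : Fin n => α * t * μ i) = (α * t) • μ := by
      ext i; simp [mul_assoc]
    have hMdiag : M = S * Matrix.diagonal (fun i => 1 + α * t * μ i) * S⁻¹ := by
      have h1 : (α * t) • (C₀ * B) = S * Matrix.diagonal (fun i => α * t * μ i) * S⁻¹ := by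
        rw [hCB, hfun, Matrix.diagonal_smul, Matrix.mul_smul, Matrix.smul_mul]
      have h2 : (1 : Matrix (Fin n) (Fin n) ℝ) =
          S * Matrix.diagonal (fun _ : Fin n => (1:ℝ)) * S⁻¹ := by
        rw [Matrix.diagonal_one, Matrix.mul_one, hSS]
      rw [hM, h1]
      nth_rewrite 1 [h2]
      rw [← Matrix.add_mul, ← Matrix.mul_add, Matrix.diagonal_add]
    have hMinv : M * (S * Matrix.diagonal (fun i => (1 + α * t * μ i)⁻¹) * S⁻¹) = 1 := by
      rw [hMdiag, conj_mul, Matrix.diagonal_mul_diagonal]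
      have : (fun i : Fin n => (1 + α * t * μ i) * (1 + α * t * μ i)⁻¹) =
          fun _ : Fin n => (1:ℝ) := by
        ext i
        exact mul_inv_cancel₀ (hpos t ht i).ne'
      rw [this, Matrix.diagonal_one, Matrix.mul_one, hSS]
    have hMunit : IsUnit M.det := Matrix.isUnit_det_of_right_inverse hMinv
    have hNunit : IsUnit N.det := by
      have : N.det = M.det := by
        rw [hN, hM]
        have e1 : (α * t) • (B * C₀) = ((α * t) • B) * C₀ := by rw [Matrix.smul_mul]
        have e2 : (α * t) • (C₀ * B) = C₀ * ((α * t) • B) := by rw [Matrix.mul_smul]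
        rw [e1, e2, Matrix.det_one_add_mul_comm]
      rw [this]; exact hMunit
    have hMN : M * C₀ = C₀ * N := by
      rw [hM, hN]
      rw [Matrix.add_mul, Matrix.mul_add, Matrix.one_mul, Matrix.mul_one,
        Matrix.smul_mul, Matrix.mul_smul, Matrix.mul_assoc]
    have hMinv' : M⁻¹ = S * Matrix.diagonal (fun i => (1 + α * t * μ i)⁻¹) * S⁻¹ :=
      Matrix.inv_eq_right_inv hMinv
    have hfinal : C₀ * N⁻¹ = M⁻¹ * C₀ := by
      calc C₀ * N⁻¹ = M⁻¹ * (M * C₀) * N⁻¹ := by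
            rw [← Matrix.mul_assoc, Matrix.nonsing_inv_mul M hMunit, Matrix.one_mul]
        _ = M⁻¹ * (C₀ * (N * N⁻¹)) := by rw [hMN, Matrix.mul_assoc, Matrix.mul_assoc]
        _ = M⁻¹ * C₀ := by rw [Matrix.mul_nonsing_inv N hNunit, Matrix.mul_one]
    rw [hC t]
    have hNeq : (1 + (α * t) • (Aᵀ * Γ⁻¹ * A * C₀)) = N := by rw [hN, hB]
    rw [hNeq, hfinal, hMinv']
  -- expansion of entries
  have expand : ∀ (v : Fin n → ℝ) (i j : Fin n),
      (S * Matrix.diagonal v * S⁻¹ * C₀) i j = ∑ l, S i l * v l * ((S⁻¹ * C₀) l j) := by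
    intro v i j
    have h : S * Matrix.diagonal v * S⁻¹ * C₀ = (S * Matrix.diagonal v) * (S⁻¹ * C₀) := by
      rw [Matrix.mul_assoc]
    rw [h, Matrix.mul_apply]
    apply Finset.sum_congr rfl
    intro l _
    rw [Matrix.mul_diagonal]
  constructor
  · intro i j
    have hev : (fun t : ℝ => C t i j) =ᶠ[atTop]
        (fun t : ℝ => ∑ l, S i l * (1 + α * t * μ l)⁻¹ * ((S⁻¹ * C₀) l j)) := by
      filter_upwards [eventually_ge_atTop (0:ℝ)] with t ht
      rw [key t ht, expand]
    rw [hCinf, expand]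
    apply Tendsto.congr' hev.symm
    apply tendsto_finset_sum
    intro l _
    rcases lt_or_ge (l : ℕ) k with h | h
    · simp only [if_pos h, mul_zero, zero_mul]
      have h1 : Tendsto (fun t : ℝ => 1 + α * t * μ l) atTop atTop := by
        apply tendsto_atTop_add_const_left
        have he : (fun t : ℝ => α * t * μ l) = fun t : ℝ => (α * μ l) * t := by
          ext t; ring
        rw [he]
        exact Tendsto.const_mul_atTop (mul_pos hα (hμpos l h)) tendsto_id
      have h2 : Tendsto (fun t : ℝ => (1 + α * t * μ l)⁻¹) atTop (𝓝 0) :=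
        tendsto_inv_atTop_zero.comp h1
      have h3 := (h2.const_mul (S i l)).mul_const ((S⁻¹ * C₀) l j)
      simpa using h3
    · have hμl : μ l = 0 := hμzero l h
      simp only [if_neg (not_lt.mpr h), hμl, mul_zero, add_zero, inv_one]
      exact tendsto_const_nhds
  · -- A * Cinf = 0
    have hDE : Matrix.diagonal μ * Matrix.diagonal
        (fun i : Fin n => if (i : ℕ) < k then (0:ℝ) else 1) = 0 := by
      rw [Matrix.diagonal_mul_diagonal]
      have h : (fun i : Fin n => μ i * if (i : ℕ) < k then (0:ℝ) else 1) = fun _ => 0 := by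
        ext i
        rcases lt_or_ge (i : ℕ) k with h | h
        · simp [h]
        · simp [hμzero i h]
      rw [h, Matrix.diagonal_zero]
    have hBC : B * Cinf = 0 := by
      have h0 : C₀ * (B * Cinf) = 0 := by
        rw [← Matrix.mul_assoc, hCB, hCinf, ← Matrix.mul_assoc, conj_mul, hDE,
          Matrix.mul_zero, Matrix.zero_mul, Matrix.zero_mul]
      have hC₀unit : IsUnit C₀.det := isUnit_iff_ne_zero.mpr hC₀.det_pos.ne'
      calc B * Cinf = C₀⁻¹ * (C₀ * (B * Cinf)) := by
            rw [← Matrix.mul_assoc, Matrix.nonsing_inv_mul C₀ hC₀unit, Matrix.one_mul]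
        _ = 0 := by rw [h0, Matrix.mul_zero]
    set Z : Matrix (Fin m) (Fin n) ℝ := A * Cinf with hZ
    have hZZ : Zᵀ * Γ⁻¹ * Z = 0 := by
      have h : Zᵀ * Γ⁻¹ * Z = Cinfᵀ * (B * Cinf) := by
        rw [hZ, hB, Matrix.transpose_mul]
        simp only [Matrix.mul_assoc]
      rw [h, hBC, Matrix.mul_zero]
    have hΓinv : (Γ⁻¹).PosDef := hΓ.inv
    have hZ0 : Z = 0 := by
      ext i j
      by_contra hne
      have hcol : (fun a => Z a j) ≠ 0 := by
        intro h
        exact hne (by simpa using congrFun h i)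
      have hpd := hΓinv.dotProduct_mulVec_pos hcol
      have heq : (Zᵀ * Γ⁻¹ * Z) j j =
          star (fun a => Z a j) ⬝ᵥ (Γ⁻¹).mulVec (fun a => Z a j) := by
        simp only [Matrix.mul_apply, Matrix.mulVec, dotProduct, Matrix.transpose_apply,
          star_trivial, Finset.sum_mul, Finset.mul_sum]
        rw [Finset.sum_comm]
        apply Finset.sum_congr rfl
        intro a _
        apply Finset.sum_congr rfl
        intro b _
        ring
      rw [hZZ] at heq
      simp only [Matrix.zero_apply] at heq
      rw [← heq] at hpd
      exact lt_irrefl 0 (by simpa using hpd)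
    exact hZ0
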